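/- Let d ≥ K ≥ 2 and τ > 0. Then every global minimizer (W,Q) of f̄ over OB(d,K) × OB(d,K) satisfies Q = W and QᵀQ = (K/(K−1))·(I_K − (1/K)·1_K 1_Kᵀ). -/

import Mathlib

open scoped BigOperators Matrix
open Finset

/-- Cross-entropy loss: `L_CE(z,k) = log (∑_ℓ exp (z_ℓ)) − z_k`. -/
noncomputable def LCE {K : ℕ} (z : Fin K → ℝ) (k : Fin K) : ℝ :=
  Real.log (∑ ℓ, Real.exp (z ℓ)) - z k

/-- The oblique manifold: matrices all of whose columns have unit Euclidean norm. -/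
def OB (p : ℕ) (ι : Type) [Fintype ι] : Set (Matrix (Fin p) ι ℝ) :=
  {M | ∀ j, ∑ i, (M i j) ^ 2 = 1}

/-- The reduced risk `f̄(W,Q) = (1/K) ∑_k L_CE(τ Wᵀ q_k, k)`. -/
noncomputable def fbar {d K : ℕ} (τ : ℝ) (W Q : Matrix (Fin d) (Fin K) ℝ) : ℝ :=
  (1 / (K : ℝ)) * ∑ k : Fin K, LCE (fun ℓ => τ * ∑ r, W r ℓ * Q r k) k

lemma exp_tangent (m x : ℝ) : Real.exp m * (x - m + 1) ≤ Real.exp x := by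
  have h := Real.add_one_le_exp (x - m)
  calc Real.exp m * (x - m + 1) ≤ Real.exp m * Real.exp (x - m) :=
        mul_le_mul_of_nonneg_left h (Real.exp_pos m).le
    _ = Real.exp x := by rw [← Real.exp_add]; ring_nf

lemma exp_tangent_eq {m x : ℝ} (h : Real.exp m * (x - m + 1) = Real.exp x) : x = m := by
  by_contra hne
  have h1 : Real.exp m * (x - m + 1) < Real.exp m * Real.exp (x - m) :=
    mul_lt_mul_of_pos_left (Real.add_one_lt_exp (sub_ne_zero.mpr hne)) (Real.exp_pos m)
  rw [← Real.exp_add] at h1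
  have h2 : m + (x - m) = x := by ring
  rw [h2] at h1
  exact absurd h h1.ne

lemma log_conv {p : ℝ} (hp0 : 0 < p) (hp1 : p < 1) (u : ℝ) :
    p * u ≤ Real.log (1 - p + p * Real.exp u) := by
  have hconv := convexOn_exp.2 (Set.mem_univ u) (Set.mem_univ (0:ℝ)) hp0.le
    (by linarith : (0:ℝ) ≤ 1 - p) (by ring)
  simp only [smul_eq_mul, mul_zero, add_zero, Real.exp_zero, mul_one] at hconv
  calc p * u = Real.log (Real.exp (p * u)) := (Real.log_exp _).symm
    _ ≤ Real.log (1 - p + p * Real.exp u) :=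
        Real.log_le_log (Real.exp_pos _) (by linarith)

lemma log_conv_eq {p : ℝ} (hp0 : 0 < p) (hp1 : p < 1) {u : ℝ}
    (h : p * u = Real.log (1 - p + p * Real.exp u)) : u = 0 := by
  by_contra hne
  have hconv := strictConvexOn_exp.2 (Set.mem_univ u) (Set.mem_univ (0:ℝ)) hne hp0
    (by linarith : (0:ℝ) < 1 - p) (by ring)
  simp only [smul_eq_mul, mul_zero, add_zero, Real.exp_zero, mul_one] at hconv
  have : p * u < Real.log (1 - p + p * Real.exp u) :=
    calc p * u = Real.log (Real.exp (p * u)) := (Real.log_exp _).symm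
      _ < Real.log (1 - p + p * Real.exp u) := Real.log_lt_log (Real.exp_pos _) (by linarith)
  exact absurd h this.ne

/-- Per-index lower bound on the cross-entropy term, with equality case. -/

lemma perk {K : ℕ} (hK : 2 ≤ K) (c : ℝ) (z : Fin K → ℝ) (k : Fin K) :
    (Real.log (1 + ((K:ℝ)-1) * Real.exp c)
      + (Real.exp c / (1 + ((K:ℝ)-1) * Real.exp c))
        * ((∑ ℓ, (z ℓ - z k)) - ((K:ℝ)-1)*c) ≤ LCE z k)
    ∧ (LCE z k = Real.log (1 + ((K:ℝ)-1) * Real.exp c)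
      + (Real.exp c / (1 + ((K:ℝ)-1) * Real.exp c))
        * ((∑ ℓ, (z ℓ - z k)) - ((K:ℝ)-1)*c) → ∀ ℓ, ℓ ≠ k → z ℓ - z k = c) := by
  have hK2 : (2:ℝ) ≤ (K:ℝ) := by exact_mod_cast hK
  set n : ℝ := (K:ℝ) - 1 with hn_def
  have hn : 0 < n := by simp only [hn_def]; linarith
  set E : ℝ := Real.exp c with hE_def
  have hE : 0 < E := Real.exp_pos c
  set D : ℝ := 1 + n * E with hD_def
  have hD : 0 < D := by nlinarith
  set p : ℝ := n * E / D with hp_def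
  have hp0 : 0 < p := by positivity
  have hp1 : p < 1 := by
    rw [hp_def, div_lt_one hD]; simp only [hD_def]; linarith
  set s : Finset (Fin K) := Finset.univ.erase k with hs_def
  have hcard : (s.card : ℝ) = n := by
    rw [hs_def, Finset.card_erase_of_mem (mem_univ k), Finset.card_univ, Fintype.card_fin]
    have h1 : 1 ≤ K := by omega
    push_cast [Nat.cast_sub h1]
    simp [hn_def]
  set m : ℝ := (∑ ℓ ∈ s, (z ℓ - z k)) / n with hm_def
  have hsum : ∑ ℓ ∈ s, (z ℓ - z k) = n * m := by
    rw [hm_def]; field_simp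
  set S : ℝ := ∑ ℓ ∈ s, Real.exp (z ℓ - z k) with hS_def
  have hS0 : 0 ≤ S := Finset.sum_nonneg fun ℓ _ => (Real.exp_pos _).le
  -- tangent sum
  have htansum : ∑ ℓ ∈ s, Real.exp m * ((z ℓ - z k) - m + 1) = n * Real.exp m := by
    rw [← Finset.mul_sum]
    have : ∑ ℓ ∈ s, ((z ℓ - z k) - m + 1)
        = (∑ ℓ ∈ s, (z ℓ - z k)) - s.card * m + s.card := by
      rw [Finset.sum_add_distrib, Finset.sum_sub_distrib]
      simp [Finset.sum_const, nsmul_eq_mul]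
    rw [this, hsum, hcard]; ring
  have hA : n * Real.exp m ≤ S := by
    rw [← htansum, hS_def]
    exact Finset.sum_le_sum fun ℓ _ => exp_tangent m _
  -- LCE rewrite
  have huniv : ∑ ℓ, Real.exp (z ℓ - z k) = 1 + S := by
    rw [← Finset.add_sum_erase _ _ (mem_univ k), sub_self, Real.exp_zero, ← hs_def, hS_def]
  have hLCE : LCE z k = Real.log (1 + S) := by
    unfold LCE
    have h1 : ∑ ℓ, Real.exp (z ℓ) = Real.exp (z k) * (1 + S) := by
      rw [← huniv, Finset.mul_sum]
      exact Finset.sum_congr rfl fun ℓ _ => by rw [← Real.exp_add]; ring_nf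
    rw [h1, Real.log_mul (Real.exp_pos _).ne' (by linarith : (1:ℝ) + S ≠ 0), Real.log_exp]
    ring
  -- sigma rewrite
  have hsig : (∑ ℓ, (z ℓ - z k)) - n * c = n * (m - c) := by
    have : ∑ ℓ, (z ℓ - z k) = ∑ ℓ ∈ s, (z ℓ - z k) := by
      rw [← Finset.add_sum_erase _ _ (mem_univ k), sub_self, ← hs_def, zero_add]
    rw [this, hsum]; ring
  have hEDp : E / D * (n * (m - c)) = p * (m - c) := by
    rw [hp_def]; ring
  -- step B
  have hkey : (1 - p) + p * Real.exp (m - c) = (1 + n * Real.exp m) / D := by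
    rw [Real.exp_sub, hp_def, ← hE_def]
    field_simp
    ring
  have hpos1 : 0 < 1 + n * Real.exp m := by nlinarith [Real.exp_pos m]
  have hB : Real.log D + p * (m - c) ≤ Real.log (1 + n * Real.exp m) := by
    have := log_conv hp0 hp1 (m - c)
    rw [hkey, Real.log_div hpos1.ne' hD.ne'] at this
    linarith
  have hchain2 : Real.log (1 + n * Real.exp m) ≤ Real.log (1 + S) :=
    Real.log_le_log hpos1 (by linarith)
  constructor
  · rw [hLCE, hsig, hEDp]
    calc Real.log D + p * (m - c) ≤ Real.log (1 + n * Real.exp m) := hB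
      _ ≤ Real.log (1 + S) := hchain2
  · intro heq ℓ hℓ
    rw [hLCE, hsig, hEDp] at heq
    have heq1 : Real.log D + p * (m - c) = Real.log (1 + n * Real.exp m) := le_antisymm hB (by linarith)
    have heq2 : Real.log (1 + n * Real.exp m) = Real.log (1 + S) := le_antisymm hchain2 (by linarith)
    -- m = c
    have hmc : m = c := by
      have h3 : p * (m - c) = Real.log ((1 - p) + p * Real.exp (m - c)) := by
        rw [hkey, Real.log_div hpos1.ne' hD.ne']; linarith
      have := log_conv_eq hp0 hp1 h3
      linarith
    -- S = n exp m
    have hSm : S = n * Real.exp m := by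
      have := Real.exp_log hpos1
      have h4 := Real.exp_log (by linarith : (0:ℝ) < 1 + S)
      have : (1:ℝ) + n * Real.exp m = 1 + S := by
        rw [← Real.exp_log hpos1, heq2, Real.exp_log (by linarith : (0:ℝ) < 1 + S)]
      linarith
    -- each term equality
    have hzero : ∑ ℓ ∈ s, (Real.exp (z ℓ - z k) - Real.exp m * ((z ℓ - z k) - m + 1)) = 0 := by
      rw [Finset.sum_sub_distrib, htansum, ← hS_def, hSm, sub_self]
    have hterm := (Finset.sum_eq_zero_iff_of_nonneg
      (fun ℓ _ => by linarith [exp_tangent m (z ℓ - z k)])).mp hzero ℓ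
      (by rw [hs_def]; exact Finset.mem_erase.mpr ⟨hℓ, mem_univ ℓ⟩)
    have : Real.exp m * ((z ℓ - z k) - m + 1) = Real.exp (z ℓ - z k) := by linarith
    have := exp_tangent_eq this
    rw [this, hmc]

lemma trace_bound {d K : ℕ} (hK : 2 ≤ K) (W Q : Matrix (Fin d) (Fin K) ℝ)
    (hW : ∀ j, ∑ i, (W i j)^2 = 1) (hQ : ∀ j, ∑ i, (Q i j)^2 = 1) :
    ((K:ℝ) * ∑ k, ∑ r, W r k * Q r k) - (∑ r, (∑ ℓ, W r ℓ) * (∑ k, Q r k)) ≤ (K:ℝ)^2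
    ∧ (((K:ℝ) * ∑ k, ∑ r, W r k * Q r k) - (∑ r, (∑ ℓ, W r ℓ) * (∑ k, Q r k)) = (K:ℝ)^2
        → Q = W) := by
  have hKpos : (0:ℝ) < (K:ℝ) := by
    have : 0 < K := by omega
    exact_mod_cast this
  set s : Fin d → ℝ := fun r => ∑ ℓ, W r ℓ with hs_def
  set t : Fin d → ℝ := fun r => ∑ k, Q r k with ht_def
  set tr : ℝ := ∑ k, ∑ r, W r k * Q r k with htr_def
  set st : ℝ := ∑ r, s r * t r with hst_def
  set B : ℝ := (∑ r, (s r)^2) + (∑ r, (t r)^2) with hB_def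
  set Δ : ℝ := ∑ r, ∑ k, ((K:ℝ) * (Q r k - W r k) - (t r - s r))^2 with hΔ_def
  -- sums of squares of Q, W
  have hQ2 : ∑ r, ∑ k : Fin K, (Q r k)^2 = (K:ℝ) := by
    rw [Finset.sum_comm]
    simp [hQ]
  have hW2 : ∑ r, ∑ k : Fin K, (W r k)^2 = (K:ℝ) := by
    rw [Finset.sum_comm]
    simp [hW]
  have htr' : ∑ r, ∑ k, W r k * Q r k = tr := by rw [htr_def, Finset.sum_comm]
  have h3 : ∑ r, ∑ k, (Q r k - W r k)^2 = 2*(K:ℝ) - 2*tr := by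
    have : ∀ r, ∑ k, (Q r k - W r k)^2
        = (∑ k, (Q r k)^2) + (∑ k, (W r k)^2) - 2 * ∑ k, W r k * Q r k := by
      intro r
      rw [← Finset.sum_add_distrib, Finset.mul_sum, ← Finset.sum_sub_distrib]
      exact Finset.sum_congr rfl fun k _ => by ring
    rw [Finset.sum_congr rfl fun r _ => this r, Finset.sum_sub_distrib,
      Finset.sum_add_distrib, hQ2, hW2, ← Finset.mul_sum, htr']
    ring
  have hQWsum : ∀ r, ∑ k, (Q r k - W r k) = t r - s r := by
    intro r
    rw [Finset.sum_sub_distrib, hs_def, ht_def]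
  have hts : ∑ r, (t r - s r)^2 = B - 2*st := by
    have : ∀ r, (t r - s r)^2 = (s r)^2 + (t r)^2 - 2*(s r * t r) := fun r => by ring
    rw [Finset.sum_congr rfl fun r _ => this r, Finset.sum_sub_distrib,
      Finset.sum_add_distrib, ← Finset.mul_sum, hB_def, hst_def]
  have hΔeq : Δ = (K:ℝ)^2 * (2*(K:ℝ) - 2*tr) - (K:ℝ) * (B - 2*st) := by
    have hper : ∀ r, ∑ k, ((K:ℝ) * (Q r k - W r k) - (t r - s r))^2
        = (K:ℝ)^2 * (∑ k, (Q r k - W r k)^2) - (K:ℝ) * (t r - s r)^2 := by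
      intro r
      have expand : ∀ k, ((K:ℝ) * (Q r k - W r k) - (t r - s r))^2
          = (K:ℝ)^2 * (Q r k - W r k)^2
            - 2*(K:ℝ)*(t r - s r) * (Q r k - W r k) + (t r - s r)^2 := fun k => by ring
      rw [Finset.sum_congr rfl fun k _ => expand k, Finset.sum_add_distrib,
        Finset.sum_sub_distrib, ← Finset.mul_sum, ← Finset.mul_sum, hQWsum r]
      simp [Finset.sum_const, Finset.card_univ]
      ring
    rw [hΔ_def, Finset.sum_congr rfl fun r _ => hper r, Finset.sum_sub_distrib,
      ← Finset.mul_sum, ← Finset.mul_sum, h3, hts]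
  -- key identity
  have hiden : (K:ℝ) * tr - st = (K:ℝ)^2 - B/2 - Δ/(2*(K:ℝ)) := by
    rw [hΔeq]; field_simp; ring
  have hB0 : 0 ≤ B := by
    rw [hB_def]
    have h1 : (0:ℝ) ≤ ∑ r, (s r)^2 := Finset.sum_nonneg fun r _ => sq_nonneg _
    have h2 : (0:ℝ) ≤ ∑ r, (t r)^2 := Finset.sum_nonneg fun r _ => sq_nonneg _
    linarith
  have hΔ0 : 0 ≤ Δ := Finset.sum_nonneg fun r _ => Finset.sum_nonneg fun k _ => sq_nonneg _
  constructor
  · rw [hiden]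
    have : 0 ≤ Δ/(2*(K:ℝ)) := by positivity
    linarith
  · intro heq
    rw [hiden] at heq
    have hDiv : 0 ≤ Δ/(2*(K:ℝ)) := by positivity
    have hB_zero : B = 0 := by linarith
    have hΔ_zero : Δ = 0 := by
      have : Δ/(2*(K:ℝ)) = 0 := by linarith
      field_simp at this
      simpa using this
    -- s = 0, t = 0
    have hs2 : ∑ r, (s r)^2 = 0 := by
      have h2 : (0:ℝ) ≤ ∑ r, (t r)^2 := Finset.sum_nonneg fun r _ => sq_nonneg _
      have h1 : (0:ℝ) ≤ ∑ r, (s r)^2 := Finset.sum_nonneg fun r _ => sq_nonneg _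
      rw [hB_def] at hB_zero; linarith
    have ht2 : ∑ r, (t r)^2 = 0 := by
      have h1 : (0:ℝ) ≤ ∑ r, (s r)^2 := Finset.sum_nonneg fun r _ => sq_nonneg _
      rw [hB_def] at hB_zero; linarith
    have hs0 : ∀ r, s r = 0 := by
      intro r
      have := (Finset.sum_eq_zero_iff_of_nonneg (fun r _ => sq_nonneg (s r))).mp hs2 r
        (mem_univ r)
      exact sq_eq_zero_iff.mp this
    have ht0 : ∀ r, t r = 0 := by
      intro r
      have := (Finset.sum_eq_zero_iff_of_nonneg (fun r _ => sq_nonneg (t r))).mp ht2 r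
        (mem_univ r)
      exact sq_eq_zero_iff.mp this
    -- Q = W
    have hΔterm : ∀ r, ∀ k, ((K:ℝ) * (Q r k - W r k) - (t r - s r))^2 = 0 := by
      intro r k
      have hrow := (Finset.sum_eq_zero_iff_of_nonneg
        (fun r _ => Finset.sum_nonneg fun k _ => sq_nonneg _)).mp hΔ_zero r (mem_univ r)
      exact (Finset.sum_eq_zero_iff_of_nonneg (fun k _ => sq_nonneg _)).mp hrow k (mem_univ k)
    ext r k
    have h7 := hΔterm r k
    rw [hs0 r, ht0 r] at h7
    have h8 : ((K:ℝ) * (Q r k - W r k))^2 = 0 := by rw [← h7]; ring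
    have h9 : (K:ℝ) * (Q r k - W r k) = 0 := sq_eq_zero_iff.mp h8
    have h10 := (mul_eq_zero.mp h9).resolve_left hKpos.ne'
    exact sub_eq_zero.mp h10

lemma exists_opt (d K : ℕ) (hK : 2 ≤ K) (hdK : K ≤ d) (τ : ℝ) (hτ : 0 < τ) :
    ∃ Wo : Matrix (Fin d) (Fin K) ℝ, (∀ j, ∑ i, (Wo i j)^2 = 1) ∧
      fbar τ Wo Wo = Real.log (1 + ((K:ℝ)-1) * Real.exp (-(τ * (K:ℝ) / ((K:ℝ)-1)))) := by
  have hK2 : (2:ℝ) ≤ (K:ℝ) := by exact_mod_cast hK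
  have hK0 : (K:ℝ) ≠ 0 := by linarith
  have hK1 : (K:ℝ) - 1 ≠ 0 := by linarith
  have hK1' : (0:ℝ) < (K:ℝ) - 1 := by linarith
  set c : ℝ := -(τ * (K:ℝ) / ((K:ℝ)-1)) with hc_def
  set ι : Fin K → Fin d := Fin.castLE hdK with hι_def
  have hι_inj : Function.Injective ι := Fin.castLE_injective hdK
  set e : Fin d → Fin K → ℝ := fun r k => if r = ι k then 1 else 0 with he_def
  set χ : Fin d → ℝ := fun r => ∑ j, e r j with hχ_def
  set α : ℝ := Real.sqrt ((K:ℝ)/((K:ℝ)-1)) with hα_def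
  have hα2 : α^2 = (K:ℝ)/((K:ℝ)-1) := Real.sq_sqrt (by positivity)
  set Wo : Matrix (Fin d) (Fin K) ℝ := Matrix.of fun r k => α * (e r k - χ r / K)
    with hWo_def
  -- basic sums
  have hE1 : ∀ (k : Fin K) (f : Fin d → ℝ), ∑ r, e r k * f r = f (ι k) := by
    intro k f
    rw [Finset.sum_congr rfl (fun r _ => by
      by_cases h : r = ι k <;> simp [he_def, h] : ∀ r ∈ univ, e r k * f r = if r = ι k then f r else 0)]
    simp
  have hχι : ∀ k : Fin K, χ (ι k) = 1 := by
    intro k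
    rw [hχ_def]
    simp only [he_def]
    rw [Finset.sum_congr rfl (fun j _ => by
      by_cases h : j = k
      · simp [h]
      · have hne : ι k ≠ ι j := fun hh => h (hι_inj hh).symm
        simp [h, hne]
      : ∀ j ∈ univ, (if ι k = ι j then (1:ℝ) else 0) = if j = k then 1 else 0)]
    simp
  have hE2 : ∀ j j' : Fin K, ∑ r, e r j * e r j' = if j = j' then (1:ℝ) else 0 := by
    intro j j'
    rw [hE1 j (fun r => e r j')]
    simp only [he_def]
    by_cases h : j = j'
    · simp [h]
    · have : ι j ≠ ι j' := fun hh => h (hι_inj hh)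
      simp [this, h]
  have hE3 : ∀ k : Fin K, ∑ r, e r k * χ r = 1 := by
    intro k; rw [hE1 k χ, hχι]
  have hC1 : ∑ r, χ r * χ r = (K:ℝ) := by
    have : ∀ r, χ r * χ r = ∑ j, e r j * χ r := by
      intro r
      rw [hχ_def]
      exact Finset.sum_mul _ _ _
    rw [Finset.sum_congr rfl fun r _ => this r, Finset.sum_comm]
    rw [Finset.sum_congr rfl fun j _ => hE3 j]
    simp
  -- gram entries
  have ha : ∀ k ℓ : Fin K, ∑ r, Wo r ℓ * Wo r k
      = α^2 * ((if ℓ = k then 1 else 0) - 1/K) := by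
    intro k ℓ
    have expand : ∀ r, Wo r ℓ * Wo r k
        = α^2 * (e r ℓ * e r k - (e r ℓ * χ r) * (1/K) - (e r k * χ r) * (1/K)
            + (χ r * χ r) * (1/K^2)) := by
      intro r
      simp only [hWo_def, Matrix.of_apply]
      ring
    rw [Finset.sum_congr rfl fun r _ => expand r, ← Finset.mul_sum]
    congr 1
    rw [Finset.sum_add_distrib, Finset.sum_sub_distrib, Finset.sum_sub_distrib,
      ← Finset.sum_mul, ← Finset.sum_mul, ← Finset.sum_mul, hE2, hE3, hE3, hC1]
    field_simp
    by_cases h : ℓ = k <;> simp [h] <;> ring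
  have hdiag : ∀ k : Fin K, α^2 * ((if k = k then (1:ℝ) else 0) - 1/K) = 1 := by
    intro k
    rw [show (if k = k then (1:ℝ) else 0) = 1 from if_pos rfl, hα2]
    field_simp
  -- column norms
  refine ⟨Wo, fun j => ?_, ?_⟩
  · have : ∀ r, (Wo r j)^2 = Wo r j * Wo r j := fun r => sq (Wo r j) ▸ by ring
    rw [Finset.sum_congr rfl fun r _ => this r, ha j j, hdiag]
  -- fbar value
  · have hz : ∀ k : Fin K, (fun ℓ => τ * ∑ r, Wo r ℓ * Wo r k)
        = fun ℓ => if ℓ = k then τ else -(τ/((K:ℝ)-1)) := by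
      intro k
      funext ℓ
      rw [ha k ℓ]
      by_cases h : ℓ = k
      · subst h
        rw [if_pos rfl, if_pos rfl, hα2]
        field_simp
      · rw [if_neg h, if_neg h, hα2]
        field_simp
        ring
    have hLCEk : ∀ k : Fin K,
        LCE (fun ℓ => if ℓ = k then τ else -(τ/((K:ℝ)-1))) k
          = Real.log (1 + ((K:ℝ)-1) * Real.exp c) := by
      intro k
      unfold LCE
      have hsum : ∑ ℓ, Real.exp (if ℓ = k then τ else -(τ/((K:ℝ)-1)))
          = Real.exp τ + ((K:ℝ)-1) * Real.exp (-(τ/((K:ℝ)-1))) := by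
        rw [← Finset.add_sum_erase _ _ (mem_univ k), if_pos rfl]
        congr 1
        rw [Finset.sum_congr rfl (fun ℓ hℓ => by
          rw [if_neg (Finset.mem_erase.mp hℓ).1]
          : ∀ ℓ ∈ univ.erase k, Real.exp (if ℓ = k then τ else -(τ/((K:ℝ)-1)))
              = Real.exp (-(τ/((K:ℝ)-1)))), Finset.sum_const,
          Finset.card_erase_of_mem (mem_univ k), Finset.card_univ, Fintype.card_fin,
          nsmul_eq_mul]
        congr 1
        have h1 : 1 ≤ K := by omega
        push_cast [Nat.cast_sub h1]
        ring
      rw [hsum]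
      have hk : (fun ℓ => if ℓ = k then τ else -(τ/((K:ℝ)-1))) k = τ := by simp
      rw [hk]
      have hprod : (1 + ((K:ℝ)-1) * Real.exp c)
          = (Real.exp τ + ((K:ℝ)-1) * Real.exp (-(τ/((K:ℝ)-1)))) * Real.exp (-τ) := by
        have hc' : c = -(τ/((K:ℝ)-1)) + -τ := by
          rw [hc_def]
          field_simp
          ring
        have h1 : Real.exp τ * Real.exp (-τ) = 1 := by
          rw [← Real.exp_add]; simp
        have h2 : Real.exp (-(τ/((K:ℝ)-1))) * Real.exp (-τ) = Real.exp c := by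
          rw [← Real.exp_add, hc']
        rw [add_mul, mul_assoc, h2, h1]
      rw [hprod, Real.log_mul (by positivity) (Real.exp_pos _).ne', Real.log_exp]
      ring
    unfold fbar
    rw [Finset.sum_congr rfl fun k _ => (hz k ▸ hLCEk k : LCE (fun ℓ => τ * ∑ r, Wo r ℓ * Wo r k) k = Real.log (1 + ((K:ℝ)-1) * Real.exp c))]
    rw [Finset.sum_const, Finset.card_univ, Fintype.card_fin, nsmul_eq_mul]
    field_simp

theorem fbar_global_min_structure (d K : ℕ) (hK : 2 ≤ K) (hdK : K ≤ d)
    (τ : ℝ) (hτ : 0 < τ)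
    (W Q : Matrix (Fin d) (Fin K) ℝ)
    (hW : W ∈ OB d (Fin K)) (hQ : Q ∈ OB d (Fin K))
    (hmin : ∀ W' Q' : Matrix (Fin d) (Fin K) ℝ, W' ∈ OB d (Fin K) → Q' ∈ OB d (Fin K) →
      fbar τ W Q ≤ fbar τ W' Q') :
    Q = W ∧
    Qᵀ * Q = ((K : ℝ) / ((K : ℝ) - 1)) •
      ((1 : Matrix (Fin K) (Fin K) ℝ) - ((K : ℝ))⁻¹ • Matrix.of fun _ _ => (1 : ℝ)) := by
  have hK2 : (2:ℝ) ≤ (K:ℝ) := by exact_mod_cast hK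
  have hK0 : (K:ℝ) ≠ 0 := by linarith
  have hK1 : ((K:ℝ) - 1) ≠ 0 := by linarith
  have hKpos : (0:ℝ) < (K:ℝ) := by linarith
  set c : ℝ := -(τ * (K:ℝ) / ((K:ℝ)-1)) with hc_def
  set E : ℝ := Real.exp c with hE_def
  have hE : 0 < E := Real.exp_pos c
  set D : ℝ := 1 + ((K:ℝ)-1) * E with hD_def
  have hD : 0 < D := by nlinarith
  set L : ℝ := Real.log D with hL_def
  -- abbreviations
  set a : Fin K → Fin K → ℝ := fun k ℓ => ∑ r, W r ℓ * Q r k with ha_def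
  set z : Fin K → Fin K → ℝ := fun k ℓ => τ * a k ℓ with hz_def
  set σ : Fin K → ℝ := fun k => (∑ ℓ, (z k ℓ - z k k)) - ((K:ℝ)-1)*c with hσ_def
  -- per-k bounds
  have hperk := fun k : Fin K => perk hK c (z k) k
  have hLB : ∀ k, L + (E/D) * σ k ≤ LCE (z k) k := fun k => (hperk k).1
  -- trace bound
  have htb := trace_bound hK W Q hW hQ
  set tr : ℝ := ∑ k, ∑ r, W r k * Q r k with htr_def
  set st : ℝ := ∑ r, (∑ ℓ, W r ℓ) * (∑ k, Q r k) with hst_def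
  -- A = st
  have hA : ∑ k, ∑ ℓ, a k ℓ = st := by
    rw [hst_def]
    have h1 : ∀ r : Fin d, (∑ ℓ, W r ℓ) * (∑ k, Q r k) = ∑ k, ∑ ℓ, W r ℓ * Q r k := by
      intro r
      rw [Finset.mul_sum]
      exact Finset.sum_congr rfl fun k _ => by rw [Finset.sum_mul]
    rw [Finset.sum_congr rfl fun r _ => h1 r]
    calc ∑ k, ∑ ℓ, a k ℓ
        = ∑ k : Fin K, ∑ r : Fin d, ∑ ℓ : Fin K, W r ℓ * Q r k :=
          Finset.sum_congr rfl fun k _ => Finset.sum_comm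
      _ = ∑ r : Fin d, ∑ k : Fin K, ∑ ℓ : Fin K, W r ℓ * Q r k := Finset.sum_comm
  -- Σ computation
  have hSg : ∑ k, σ k = τ * (st - (K:ℝ)*tr + (K:ℝ)^2) := by
    have h1 : ∀ k, σ k = τ * (∑ ℓ, a k ℓ) - (K:ℝ) * (τ * a k k) + τ * (K:ℝ) := by
      intro k
      rw [hσ_def]
      simp only [hz_def]
      rw [Finset.sum_sub_distrib, ← Finset.mul_sum]
      simp only [Finset.sum_const, Finset.card_univ, Fintype.card_fin, nsmul_eq_mul]
      rw [hc_def]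
      field_simp
      ring
    rw [Finset.sum_congr rfl fun k _ => h1 k, Finset.sum_add_distrib,
      Finset.sum_sub_distrib, ← Finset.mul_sum, hA, ← Finset.mul_sum, ← Finset.mul_sum]
    simp only [Finset.sum_const, Finset.card_univ, Fintype.card_fin, nsmul_eq_mul]
    rw [htr_def]
    ring
  have hSg0 : 0 ≤ ∑ k, σ k := by
    rw [hSg]
    have := htb.1
    nlinarith
  -- lower bound for fbar
  have hfz : fbar τ W Q = (1/(K:ℝ)) * ∑ k, LCE (z k) k := rfl
  have hgeL : (K:ℝ) * L + (E/D) * (∑ k, σ k) ≤ ∑ k, LCE (z k) k := by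
    have := Finset.sum_le_sum fun k (_ : k ∈ univ) => hLB k
    rw [Finset.sum_add_distrib, ← Finset.mul_sum] at this
    simp only [Finset.sum_const, Finset.card_univ, Fintype.card_fin, nsmul_eq_mul] at this
    linarith
  -- minimality
  obtain ⟨Wo, hWo, hWoval⟩ := exists_opt d K hK hdK τ hτ
  have hle : fbar τ W Q ≤ L := by
    have := hmin Wo Wo hWo hWo
    rw [hWoval] at this
    exact this
  have hED : 0 < E/D := by positivity
  have hge : L ≤ fbar τ W Q := by
    rw [hfz]
    have h2 : (K:ℝ) * L ≤ ∑ k, LCE (z k) k := by nlinarith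
    have h3 : L ≤ (1/(K:ℝ)) * ((K:ℝ) * L) := by field_simp; exact le_rfl
    calc L = (1/(K:ℝ)) * ((K:ℝ) * L) := by field_simp
      _ ≤ (1/(K:ℝ)) * ∑ k, LCE (z k) k := by
          apply mul_le_mul_of_nonneg_left h2 (by positivity)
  have hfeq : fbar τ W Q = L := le_antisymm hle hge
  -- extract equalities
  have hsumLCE : ∑ k, LCE (z k) k = (K:ℝ) * L := by
    rw [hfz] at hfeq
    field_simp at hfeq
    linarith [hfeq]
  have hSgzero : ∑ k, σ k = 0 := by
    have h4 : (E/D) * (∑ k, σ k) ≤ 0 := by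
      rw [hsumLCE] at hgeL; linarith
    have h5 : 0 ≤ (E/D) * (∑ k, σ k) := mul_nonneg hED.le hSg0
    have h6 : (E/D) * (∑ k, σ k) = 0 := le_antisymm h4 h5
    rcases mul_eq_zero.mp h6 with h | h
    · exact absurd h hED.ne'
    · exact h
  -- each per-k inequality is tight
  have hLCEeq : ∀ k, LCE (z k) k = L + (E/D) * σ k := by
    have hzero : ∑ k, (LCE (z k) k - (L + (E/D) * σ k)) = 0 := by
      rw [Finset.sum_sub_distrib, hsumLCE, Finset.sum_add_distrib, ← Finset.mul_sum, hSgzero]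
      simp
    intro k
    have := (Finset.sum_eq_zero_iff_of_nonneg
      (fun k _ => by linarith [hLB k])).mp hzero k (mem_univ k)
    linarith
  have hzc : ∀ k ℓ : Fin K, ℓ ≠ k → z k ℓ - z k k = c := by
    intro k ℓ hkl
    exact (hperk k).2 (hLCEeq k) ℓ hkl
  -- Q = W
  have hQW : Q = W := by
    apply htb.2
    have : τ * (st - (K:ℝ)*tr + (K:ℝ)^2) = 0 := by rw [← hSg, hSgzero]
    have h7 : st - (K:ℝ)*tr + (K:ℝ)^2 = 0 := by
      rcases mul_eq_zero.mp this with h | h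
      · exact absurd h hτ.ne'
      · exact h
    linarith
  -- diagonal entries
  have hdiag : ∀ k : Fin K, a k k = 1 := by
    intro k
    rw [ha_def]
    simp only [hQW]
    rw [← hW k]
    exact Finset.sum_congr rfl fun r _ => (sq (W r k)).symm
  -- off-diagonal entries
  have hoff : ∀ k ℓ : Fin K, ℓ ≠ k → a k ℓ = -(1/((K:ℝ)-1)) := by
    intro k ℓ hkl
    have h8 := hzc k ℓ hkl
    simp only [hz_def] at h8
    rw [hdiag k] at h8
    have h9 : a k ℓ = c/τ + 1 := by
      field_simp at h8 ⊢
      linarith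
    rw [h9, hc_def]
    field_simp
    ring
  refine ⟨hQW, ?_⟩
  ext i j
  have hentry : (Qᵀ * Q) i j = a j i := by
    rw [Matrix.mul_apply, ha_def]
    simp only [Matrix.transpose_apply, hQW]
  rw [hentry]
  simp only [Matrix.smul_apply, Matrix.sub_apply, Matrix.smul_apply, Matrix.of_apply,
    Matrix.one_apply, smul_eq_mul]
  by_cases h : i = j
  · subst h
    rw [hdiag i, if_pos rfl]
    field_simp
  · rw [hoff j i h, if_neg h]
    field_simp
    ring
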